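/- (Exact recursion for Fourier coefficients) Let S be the injective n-tuples in (ℤ/nℤ)ⁿ, let 1 ≤ m ≤ n, and let r₁,…,r_m ∈ (1/n)ℤ/ℤ with r_m ≠ 0. Then \widehat{1_S}(r₁,…,r_m,0,…,0) = −(1/(n−m+1)) ∑_{i=1}^{m−1} \widehat{1_S}(r₁,…,rᵢ+r_m,…,r_{m−1},0,…,0), where on the right rᵢ is replaced by rᵢ + r_m and the coordinate r_m is removed. -/

import Mathlib

set_option maxHeartbeats 1000000


open Finset

/-- `e(x) = exp(2πi x/n)` for `x ∈ ZMod n`, realizing the identification of the dual of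
`ZMod n` with `(1/n)ℤ/ℤ`. -/
noncomputable def eZ (n : ℕ) (x : ZMod n) : ℂ :=
  Complex.exp (2 * Real.pi * Complex.I * (x.val : ℂ) / (n : ℂ))

/-- The Fourier coefficient `\widehat{1_S}(r₁,…,r_n)` of the set `S` of injective
`n`-tuples in `(ZMod n)ⁿ`, namely `n^{-n} ∑_{x ∈ S} e(-∑ᵢ rᵢ xᵢ)`. -/
noncomputable def fourierS (n : ℕ) [NeZero n] (r : Fin n → ZMod n) : ℂ :=
  ((n : ℂ) ^ n)⁻¹ *
    ∑ x ∈ Finset.univ.filter (fun x : Fin n → ZMod n => Function.Injective x),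
      eZ n (-(∑ i, r i * x i))

/-- The Fourier coefficient `\widehat{1_S}(r₁,…,r_m,0,…,0)`, for `r` an `m`-tuple of
frequencies padded with zeros. -/
noncomputable def fourierSparse (n m : ℕ) [NeZero n] (r : Fin m → ZMod n) : ℂ :=
  fourierS n (fun i => if h : (i : ℕ) < m then r ⟨i, h⟩ else 0)

lemma eZ_pow (n : ℕ) [NeZero n] (x : ZMod n) :
    eZ n x = Complex.exp (2 * Real.pi * Complex.I / n) ^ x.val := by
  rw [eZ, ← Complex.exp_nat_mul]; ring_nf

lemma zeta_pow (n : ℕ) [NeZero n] : Complex.exp (2 * Real.pi * Complex.I / n) ^ n = 1 := by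
  rw [← Complex.exp_nat_mul, mul_div_cancel₀ _ (by exact_mod_cast (NeZero.ne n) : (n:ℂ) ≠ 0)]
  exact Complex.exp_two_pi_mul_I

lemma zeta_pow_mod (n : ℕ) [NeZero n] (k : ℕ) :
    Complex.exp (2 * Real.pi * Complex.I / n) ^ (k % n)
      = Complex.exp (2 * Real.pi * Complex.I / n) ^ k := by
  conv_rhs => rw [← Nat.mod_add_div k n]
  rw [pow_add, pow_mul, zeta_pow, one_pow, mul_one]

lemma eZ_add (n : ℕ) [NeZero n] (a b : ZMod n) : eZ n (a + b) = eZ n a * eZ n b := by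
  rw [eZ_pow, eZ_pow, eZ_pow, ← pow_add, ZMod.val_add, zeta_pow_mod]

lemma sum_eZ (n : ℕ) [NeZero n] (c : ZMod n) (hc : c ≠ 0) :
    ∑ y : ZMod n, eZ n (c * y) = 0 := by
  have hn : n ≠ 0 := NeZero.ne n
  have hprim : IsPrimitiveRoot (Complex.exp (2 * Real.pi * Complex.I / n)) n :=
    Complex.isPrimitiveRoot_exp n hn
  set ζ := Complex.exp (2 * Real.pi * Complex.I / n) with hζ
  have hw : ζ ^ c.val ≠ 1 := by
    apply hprim.pow_ne_one_of_pos_of_lt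
    · exact (fun h => hc (by rwa [← ZMod.val_eq_zero]))
    · exact ZMod.val_lt c
  have key : ∀ y : ZMod n, eZ n (c * y) = (ζ ^ c.val) ^ y.val := by
    intro y
    rw [eZ_pow, ← pow_mul, ZMod.val_mul, zeta_pow_mod]
  simp_rw [key]
  have : ∑ y : ZMod n, (ζ ^ c.val) ^ y.val = ∑ k ∈ Finset.range n, (ζ ^ c.val) ^ k := by
    apply Finset.sum_nbij (fun y => y.val)
    · intro y _; exact Finset.mem_range.mpr (ZMod.val_lt y)
    · intro a _ b _ hab; exact ZMod.val_injective n hab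
    · intro k hk
      refine ⟨(k : ZMod n), Finset.mem_univ _, ?_⟩
      show ((k : ZMod n)).val = k
      exact ZMod.val_natCast_of_lt (Finset.mem_range.mp hk)
    · intro y _; rfl
  rw [this, geom_sum_eq hw, ← pow_mul, mul_comm, pow_mul, zeta_pow, one_pow, sub_self,
    zero_div]

lemma filter_lt_eq_map (n m : ℕ) (hmn : m ≤ n) :
    (Finset.univ.filter (fun j : Fin n => (j : ℕ) < m))
      = Finset.univ.map (Fin.castLEEmb hmn) := by
  ext j
  simp only [Finset.mem_filter, Finset.mem_univ, true_and, Finset.mem_map]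
  constructor
  · intro hj
    exact ⟨⟨(j : ℕ), hj⟩, by ext; rfl⟩
  · rintro ⟨i, rfl⟩
    exact i.isLt

lemma pad_sum (n m : ℕ) [NeZero n] (hmn : m ≤ n) (s : Fin m → ZMod n) (x : Fin n → ZMod n) :
    ∑ j : Fin n, (if h : (j : ℕ) < m then s ⟨j, h⟩ else 0) * x j
      = ∑ i : Fin m, s i * x (Fin.castLE hmn i) := by
  rw [← Finset.sum_filter_of_ne (p := fun j : Fin n => (j : ℕ) < m)
    (fun j _ hne => by by_contra hj; rw [dif_neg hj, zero_mul] at hne; exact hne rfl)]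
  rw [filter_lt_eq_map n m hmn, Finset.sum_map]
  apply Finset.sum_congr rfl
  intro i _
  rw [dif_pos (by exact i.isLt : ((Fin.castLEEmb hmn) i : ℕ) < m)]
  rfl

lemma sum_comp_perm (n : ℕ) [NeZero n] (σ : Equiv.Perm (Fin n))
    (F : (Fin n → ZMod n) → ℂ) :
    ∑ x ∈ Finset.univ.filter (fun x : Fin n → ZMod n => Function.Injective x), F (x ∘ σ)
      = ∑ x ∈ Finset.univ.filter (fun x : Fin n → ZMod n => Function.Injective x), F x := by
  apply Finset.sum_nbij' (fun x => x ∘ σ) (fun x => x ∘ σ.symm)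
  · intro x hx
    simp only [Finset.mem_filter, Finset.mem_univ, true_and] at hx ⊢
    exact hx.comp σ.injective
  · intro x hx
    simp only [Finset.mem_filter, Finset.mem_univ, true_and] at hx ⊢
    exact hx.comp σ.symm.injective
  · intro x _; funext k; simp
  · intro x _; funext k; simp
  · intro x _; rfl

/-- Exact recursion: if `r_{m+1} ≠ 0` then
`\widehat{1_S}(r₁,…,r_{m+1},0,…,0)
  = −(1/(n−m)) ∑_{i=1}^{m} \widehat{1_S}(r₁,…,rᵢ+r_{m+1},…,r_m,0,…,0)`. -/
theorem fourierSparse_recursion (n m : ℕ) [NeZero n] (h : m + 1 ≤ n)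
    (r : Fin (m + 1) → ZMod n) (hr : r (Fin.last m) ≠ 0) :
    fourierSparse n (m + 1) r =
      -(1 / ((n : ℂ) - (m : ℂ))) * ∑ i : Fin m,
        fourierSparse n m
          (fun j => r j.castSucc + if j = i then r (Fin.last m) else 0) := by
  classical
  have hmlt : m < n := h
  have hml : m ≤ n := hmlt.le
  set c := r (Fin.last m) with hc
  set km : Fin n := ⟨m, hmlt⟩ with hkm
  set T : (Fin n → ZMod n) → ZMod n :=
    fun x => ∑ i : Fin m, r i.castSucc * x (Fin.castLE hml i) with hT
  set S := Finset.univ.filter (fun x : Fin n → ZMod n => Function.Injective x) with hS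
  set A : Fin n → ℂ := fun k => ∑ x ∈ S, eZ n (-(T x + c * x k)) with hA
  -- swap invariance
  have hswap : ∀ k : Fin n, m ≤ (k : ℕ) → A k = A km := by
    intro k hk
    show (∑ x ∈ S, eZ n (-(T x + c * x k))) = ∑ x ∈ S, eZ n (-(T x + c * x km))
    rw [← sum_comp_perm n (Equiv.swap km k) (fun x => eZ n (-(T x + c * x km)))]
    apply Finset.sum_congr rfl
    intro x _
    have h1 : (x ∘ Equiv.swap km k) km = x k := by
      simp [Equiv.swap_apply_left]
    have h2 : T (x ∘ Equiv.swap km k) = T x := by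
      show (∑ i : Fin m, r i.castSucc * (x ∘ Equiv.swap km k) (Fin.castLE hml i)) = _
      apply Finset.sum_congr rfl
      intro i _
      congr 1
      show x (Equiv.swap km k (Fin.castLE hml i)) = x (Fin.castLE hml i)
      rw [Equiv.swap_apply_of_ne_of_ne]
      · exact Fin.ne_of_val_ne (Nat.ne_of_lt i.isLt)
      · exact Fin.ne_of_val_ne (Nat.ne_of_lt (lt_of_lt_of_le i.isLt hk))
    show eZ n (-(T x + c * x k))
        = eZ n (-(T (x ∘ Equiv.swap km k) + c * (x ∘ Equiv.swap km k) km))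
    rw [h1, h2]
  -- character sum vanishes
  have hzero : ∀ x : Fin n → ZMod n, Function.Injective x →
      ∑ k : Fin n, eZ n (-(c * x k)) = 0 := by
    intro x hx
    have hbij : Function.Bijective x :=
      (Fintype.bijective_iff_injective_and_card x).mpr ⟨hx, by simp [ZMod.card]⟩
    have heq : ∑ k : Fin n, eZ n (-c * x k) = ∑ y : ZMod n, eZ n (-c * y) :=
      Fintype.sum_bijective x hbij _ _ (fun k => rfl)
    simp_rw [neg_mul] at heq
    rw [heq]
    have := sum_eZ n (-c) (neg_ne_zero.mpr hr)
    simp_rw [neg_mul] at this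
    exact this
  have hAsum : ∑ k : Fin n, A k = 0 := by
    show ∑ k : Fin n, ∑ x ∈ S, eZ n (-(T x + c * x k)) = 0
    rw [Finset.sum_comm]
    apply Finset.sum_eq_zero
    intro x hx
    have hx' : Function.Injective x := by
      rw [hS] at hx
      exact (Finset.mem_filter.mp hx).2
    calc ∑ k : Fin n, eZ n (-(T x + c * x k))
        = ∑ k : Fin n, eZ n (-(T x)) * eZ n (-(c * x k)) := by
          apply Finset.sum_congr rfl; intro k _
          rw [neg_add, eZ_add]
      _ = eZ n (-(T x)) * ∑ k : Fin n, eZ n (-(c * x k)) := by rw [Finset.mul_sum]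
      _ = 0 := by rw [hzero x hx', mul_zero]
  -- cardinalities
  have hcard_lt : (Finset.univ.filter (fun k : Fin n => (k : ℕ) < m)).card = m := by
    rw [filter_lt_eq_map n m hml, Finset.card_map, Finset.card_univ, Fintype.card_fin]
  have hcard_ge : (Finset.univ.filter (fun k : Fin n => ¬ (k : ℕ) < m)).card = n - m := by
    have h2 := Finset.card_filter_add_card_filter_not
      (s := (Finset.univ : Finset (Fin n))) (p := fun k : Fin n => (k : ℕ) < m)
    rw [Finset.card_univ, Fintype.card_fin, hcard_lt] at h2
    omega
  have hsum_ge : ∑ k ∈ Finset.univ.filter (fun k : Fin n => ¬ (k : ℕ) < m), A k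
      = ((n - m : ℕ) : ℂ) * A km := by
    calc ∑ k ∈ Finset.univ.filter (fun k : Fin n => ¬ (k : ℕ) < m), A k
        = ∑ _k ∈ Finset.univ.filter (fun k : Fin n => ¬ (k : ℕ) < m), A km :=
          Finset.sum_congr rfl
            (fun k hk => hswap k (not_lt.mp (Finset.mem_filter.mp hk).2))
      _ = ((n - m : ℕ) : ℂ) * A km := by
          rw [Finset.sum_const, hcard_ge, nsmul_eq_mul]
  have hsum_lt : ∑ k ∈ Finset.univ.filter (fun k : Fin n => (k : ℕ) < m), A k
      = ∑ i : Fin m, A (Fin.castLE hml i) := by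
    rw [filter_lt_eq_map n m hml, Finset.sum_map]
    rfl
  have hsplit : ∑ k ∈ Finset.univ.filter (fun k : Fin n => (k : ℕ) < m), A k
      + ∑ k ∈ Finset.univ.filter (fun k : Fin n => ¬ (k : ℕ) < m), A k = 0 := by
    rw [Finset.sum_filter_add_sum_filter_not, hAsum]
  have hkey : ((n : ℂ) - (m : ℂ)) * A km = -∑ i : Fin m, A (Fin.castLE hml i) := by
    rw [show ((n : ℂ) - (m : ℂ)) = ((n - m : ℕ) : ℂ) by
      rw [Nat.cast_sub hml]]
    rw [← hsum_ge, ← hsum_lt]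
    linear_combination hsplit
  have hne : ((n : ℂ) - (m : ℂ)) ≠ 0 := by
    have : ((n - m : ℕ) : ℂ) ≠ 0 := Nat.cast_ne_zero.mpr (by omega)
    rwa [Nat.cast_sub hml] at this
  -- identify both sides
  have e1 : ∀ i : Fin m, Fin.castLE h i.castSucc = Fin.castLE hml i :=
    fun i => Fin.ext (by simp)
  have e2 : Fin.castLE h (Fin.last m) = km := Fin.ext (by simp [hkm])
  have hLHS : fourierSparse n (m + 1) r = ((n : ℂ) ^ n)⁻¹ * A km := by
    rw [fourierSparse, fourierS]
    refine congrArg (fun z => ((n : ℂ) ^ n)⁻¹ * z) (Finset.sum_congr rfl fun x _ => ?_)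
    refine congrArg (eZ n) (congrArg Neg.neg ?_)
    rw [pad_sum n (m + 1) h r x, Fin.sum_univ_castSucc]
    simp_rw [e1, e2]
    rfl
  have hRHS : ∀ i : Fin m,
      fourierSparse n m (fun j => r j.castSucc + if j = i then c else 0)
        = ((n : ℂ) ^ n)⁻¹ * A (Fin.castLE hml i) := by
    intro i
    rw [fourierSparse, fourierS]
    refine congrArg (fun z => ((n : ℂ) ^ n)⁻¹ * z) (Finset.sum_congr rfl fun x _ => ?_)
    refine congrArg (eZ n) (congrArg Neg.neg ?_)
    rw [pad_sum n m hml (fun j => r j.castSucc + if j = i then c else 0) x]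
    simp only [add_mul, ite_mul, zero_mul, Finset.sum_add_distrib, Finset.sum_ite_eq',
      Finset.mem_univ, if_true]
    rfl
  rw [hLHS]
  simp only [hRHS]
  rw [← Finset.mul_sum]
  have hA' : A km = -(1 / ((n : ℂ) - (m : ℂ))) * ∑ i : Fin m, A (Fin.castLE hml i) := by
    have : A km = (-∑ i : Fin m, A (Fin.castLE hml i)) / ((n : ℂ) - (m : ℂ)) := by
      rw [eq_div_iff hne, mul_comm]
      exact hkey
    rw [this]
    ring
  rw [hA']
  ring
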